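/- arXiv:2505.18235 — 2 statements merged into one kernel-verified Lean document; each statement's English description precedes it below -/
import Mathlib

section
/- Under the local cosine-similarity hypothesis, chord length and metric distance agree to second order: with the hypotheses as above (⟨φ(z),φ(z')⟩ = g(d(z,z')²) for d(z,z') ≤ ε, g ∈ C², g'(0) < 0, |g''| ≤ C on [0,ε²]), for all z, z' with d(z,z') ≤ ε one has | ‖φ(z) − φ(z')‖₂ − √(−2g'(0)) · d(z,z') | ≤ C^{1/2} · d(z,z')². -/
lemma taylor_quad_bound (g : ℝ → ℝ) (hg : ContDiff ℝ 2 g) (C r : ℝ) (hr : 0 ≤ r)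
    (hC : ∀ t ∈ Set.Icc (0:ℝ) r, |deriv (deriv g) t| ≤ C) :
    |g r - g 0 - deriv g 0 * r| ≤ C / 2 * r ^ 2 := by
  have h2 : ContDiff ℝ (1+1) g := by norm_num [hg]
  obtain ⟨hgd, -, hg1⟩ := contDiff_succ_iff_deriv.mp h2
  have hdgd : Differentiable ℝ (deriv g) := hg1.differentiable one_ne_zero
  have hcont2 : Continuous (deriv (deriv g)) := hg1.continuous_deriv le_rfl
  have hcont1 : Continuous (deriv g) := hg1.continuous
  have stepA : ∀ t ∈ Set.Icc (0:ℝ) r, |deriv g t - deriv g 0| ≤ C * t := by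
    intro t ht
    have hftc : ∫ s in (0:ℝ)..t, deriv (deriv g) s = deriv g t - deriv g 0 :=
      intervalIntegral.integral_deriv_eq_sub (fun s _ => hdgd s)
        (hcont2.intervalIntegrable _ _)
    rw [← hftc]
    have h := intervalIntegral.norm_integral_le_of_norm_le_const
      (f := fun s => deriv (deriv g) s) (a := 0) (b := t) (C := C) ?_
    · simpa [abs_of_nonneg ht.1] using h
    · intro s hs
      rw [Set.uIoc_of_le ht.1] at hs
      exact hC s ⟨le_of_lt hs.1, hs.2.trans ht.2⟩
  have hftc : ∫ t in (0:ℝ)..r, deriv g t = g r - g 0 :=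
    intervalIntegral.integral_deriv_eq_sub (fun s _ => hgd s)
      (hcont1.intervalIntegrable _ _)
  have hint : ∫ t in (0:ℝ)..r, (deriv g t - deriv g 0) = g r - g 0 - deriv g 0 * r := by
    rw [intervalIntegral.integral_sub (hcont1.intervalIntegrable _ _)
      (intervalIntegrable_const), hftc, intervalIntegral.integral_const]
    simp [mul_comm]
  rw [← hint]
  have hb := intervalIntegral.norm_integral_le_of_norm_le
    (f := fun t => deriv g t - deriv g 0) (g := fun t => C * t) (a := 0) (b := r)
    (μ := MeasureTheory.volume) hr ?_ ?_
  · have heq : ∫ t in (0:ℝ)..r, C * t = C / 2 * r ^ 2 := by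
      rw [intervalIntegral.integral_const_mul, integral_id]; ring
    calc |∫ t in (0:ℝ)..r, (deriv g t - deriv g 0)| ≤ |∫ t in (0:ℝ)..r, C * t| := hb.trans (le_abs_self _)
      _ = C / 2 * r ^ 2 := by
        rw [heq, abs_of_nonneg]
        have h0 : (0:ℝ) ≤ C := le_trans (abs_nonneg _) (hC 0 ⟨le_rfl, hr⟩)
        positivity
  · filter_upwards with t ht
    simpa using stepA t ⟨le_of_lt ht.1, ht.2⟩
  · exact (continuous_const.mul continuous_id).intervalIntegrable _ _

lemma abs_sub_le_sqrt_abs_sq_sub_sq (a b : ℝ) (ha : 0 ≤ a) (hb : 0 ≤ b) :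
    |a - b| ≤ Real.sqrt |a ^ 2 - b ^ 2| := by
  have key : (a - b) ^ 2 ≤ |a ^ 2 - b ^ 2| := by
    have h : a ^ 2 - b ^ 2 = (a - b) * (a + b) := by ring
    rw [h, abs_mul, abs_of_nonneg (by linarith : (0:ℝ) ≤ a + b)]
    have h1 : |a - b| ≤ a + b := abs_le.mpr ⟨by linarith, by linarith⟩
    nlinarith [abs_nonneg (a - b), sq_abs (a - b)]
  calc |a - b| = Real.sqrt ((a - b) ^ 2) := (Real.sqrt_sq_eq_abs _).symm
    _ ≤ Real.sqrt |a ^ 2 - b ^ 2| := Real.sqrt_le_sqrt key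

theorem chord_local_second_order_agreement
    {Z : Type*} [MetricSpace Z] {D : ℕ}
    (φ : Z → EuclideanSpace ℝ (Fin D))
    (hsphere : ∀ z, ‖φ z‖ = 1)
    (g : ℝ → ℝ) (hg : ContDiff ℝ 2 g) (hg' : deriv g 0 < 0)
    (ε : ℝ) (hε : 0 < ε)
    (hcos : ∀ z z' : Z, dist z z' ≤ ε →
      (inner ℝ (φ z) (φ z') : ℝ) = g (dist z z' ^ 2))
    (C : ℝ) (hC : ∀ r ∈ Set.Icc 0 (ε ^ 2), |deriv (deriv g) r| ≤ C) :
    ∀ z z' : Z, dist z z' ≤ ε →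
      |‖φ z - φ z'‖ - Real.sqrt (-2 * deriv g 0) * dist z z'| ≤
        Real.sqrt C * dist z z' ^ 2 := by
  intro z z' hd
  set d := dist z z' with hdd
  have hd0 : 0 ≤ d := dist_nonneg
  have hC0 : 0 ≤ C := le_trans (abs_nonneg _) (hC 0 ⟨le_rfl, by positivity⟩)
  -- g 0 = 1
  have hg0 : g 0 = 1 := by
    have := hcos z z (by simp [hε.le])
    simp only [dist_self] at this
    rw [show ((0:ℝ)^2) = 0 by norm_num] at this
    rw [← this, real_inner_self_eq_norm_sq, hsphere z]
    norm_num
  -- chord squared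
  have hchord : ‖φ z - φ z'‖ ^ 2 = 2 - 2 * g (d ^ 2) := by
    rw [← hcos z z' hd]
    rw [norm_sub_sq_real (φ z) (φ z'), hsphere z, hsphere z']
    ring
  -- Taylor bound on r = d^2
  have hr2 : d ^ 2 ∈ Set.Icc (0:ℝ) (ε ^ 2) :=
    ⟨by positivity, by exact pow_le_pow_left₀ hd0 hd 2⟩
  have htay : |g (d ^ 2) - g 0 - deriv g 0 * d ^ 2| ≤ C / 2 * (d ^ 2) ^ 2 :=
    taylor_quad_bound g hg C (d ^ 2) (by positivity)
      (fun t ht => hC t ⟨ht.1, ht.2.trans hr2.2⟩)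
  set a := ‖φ z - φ z'‖ with ha
  set b := Real.sqrt (-2 * deriv g 0) * d with hb
  have ha0 : 0 ≤ a := norm_nonneg _
  have hb0 : 0 ≤ b := mul_nonneg (Real.sqrt_nonneg _) hd0
  have hbsq : b ^ 2 = (-2 * deriv g 0) * d ^ 2 := by
    rw [hb, mul_pow, Real.sq_sqrt (by linarith)]
  have hdiff : a ^ 2 - b ^ 2 = -2 * (g (d ^ 2) - g 0 - deriv g 0 * d ^ 2) := by
    rw [hchord, hbsq, hg0]; ring
  have hkey : |a ^ 2 - b ^ 2| ≤ C * (d ^ 2) ^ 2 := by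
    rw [hdiff, abs_mul]
    calc |(-2 : ℝ)| * |g (d ^ 2) - g 0 - deriv g 0 * d ^ 2|
        ≤ 2 * (C / 2 * (d ^ 2) ^ 2) := by
          rw [abs_of_nonpos (by norm_num : (-2:ℝ) ≤ 0)]
          nlinarith [htay]
      _ = C * (d ^ 2) ^ 2 := by ring
  calc |a - b| ≤ Real.sqrt |a ^ 2 - b ^ 2| := abs_sub_le_sqrt_abs_sq_sub_sq a b ha0 hb0
    _ ≤ Real.sqrt (C * (d ^ 2) ^ 2) := Real.sqrt_le_sqrt hkey
    _ = Real.sqrt C * d ^ 2 := by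
        rw [Real.sqrt_mul hC0, Real.sqrt_sq (by positivity)]
end

section
/- Main isometry theorem: Let (Z, d) be a metric space, φ : Z → S^{D−1} continuous, and suppose there exist ε > 0 and a C² function g with g'(0) < 0 such that ⟨φ(z), φ(z')⟩ = g(d(z,z')²) whenever d(z,z') ≤ ε. Let η : [a,b] → Z be a path of finite length and γ = φ ∘ η the corresponding path on the sphere. Then L(γ) = √(−2g'(0)) · L(η), where L denotes path length (in (Z,d) for η, and in the Euclidean metric of ℝ^D for γ). -/
open Set
open scoped ENNReal NNReal

lemma evar_comp_le {α : Type*} [LinearOrder α] {E F : Type*} [PseudoEMetricSpace E]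
    [PseudoEMetricSpace F] (f : α → E) (g : α → F) (s : Set α) (C : ℝ≥0∞)
    (h : ∀ x ∈ s, ∀ y ∈ s, edist (f x) (f y) ≤ C * edist (g x) (g y)) :
    eVariationOn f s ≤ C * eVariationOn g s := by
  apply iSup_le
  rintro ⟨n, ⟨u, hu, us⟩⟩
  calc ∑ i ∈ Finset.range n, edist (f (u (i+1))) (f (u i))
      ≤ ∑ i ∈ Finset.range n, C * edist (g (u (i+1))) (g (u i)) :=
        Finset.sum_le_sum fun i _ => h _ (us _) _ (us _)
    _ = C * ∑ i ∈ Finset.range n, edist (g (u (i+1))) (g (u i)) := by rw [Finset.mul_sum]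
    _ ≤ C * eVariationOn g s := mul_le_mul_right (eVariationOn.sum_le hu us) _

lemma evar_split {G : Type*} [PseudoEMetricSpace G] (f : ℝ → G) {a m b : ℝ}
    (h1 : a ≤ m) (h2 : m ≤ b) :
    eVariationOn f (Set.Icc a m) + eVariationOn f (Set.Icc m b)
      = eVariationOn f (Set.Icc a b) := by
  have := eVariationOn.Icc_add_Icc f (s := Set.univ) h1 h2 (Set.mem_univ m)
  simpa [Set.univ_inter] using this

lemma evar_comp_le_of_small {E F : Type*} [PseudoEMetricSpace E] [PseudoEMetricSpace F]
    (f : ℝ → E) (g : ℝ → F) (C : ℝ≥0∞) {δ : ℝ} (hδ : 0 < δ) {a b : ℝ} (hab : a ≤ b)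
    (h : ∀ x ∈ Set.Icc a b, ∀ y ∈ Set.Icc a b, |x - y| ≤ δ →
      edist (f x) (f y) ≤ C * edist (g x) (g y)) :
    eVariationOn f (Set.Icc a b) ≤ C * eVariationOn g (Set.Icc a b) := by
  obtain ⟨n, hn⟩ := exists_nat_ge ((b - a) / δ)
  have hn' : b - a ≤ n * δ := by
    rw [div_le_iff₀ hδ] at hn; linarith
  clear hn
  induction n generalizing a with
  | zero =>
    have : a = b := by push_cast at hn'; linarith
    subst this
    rw [Set.Icc_self, eVariationOn.subsingleton f (Set.subsingleton_singleton)]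
    exact zero_le
  | succ n ih =>
    by_cases hb : b ≤ a + δ
    · exact evar_comp_le f g _ C fun x hx y hy =>
        h x hx y hy (by rw [abs_le]; constructor <;> [skip; skip] <;>
          simp only [Set.mem_Icc] at hx hy <;> linarith)
    · push_neg at hb
      set m := a + δ with hm
      have ham : a ≤ m := by simp [hm]; linarith
      have hmb : m ≤ b := hb.le
      rw [← evar_split f ham hmb, ← evar_split g ham hmb, mul_add]
      gcongr
      · exact evar_comp_le f g _ C fun x hx y hy =>
          h x (⟨hx.1, hx.2.trans hmb⟩) y (⟨hy.1, hy.2.trans hmb⟩)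
            (by simp only [Set.mem_Icc, hm] at hx hy ⊢; rw [abs_le]; constructor <;> linarith)
      · exact ih hmb (fun x hx y hy => h x ⟨ham.trans hx.1, hx.2⟩ y ⟨ham.trans hy.1, hy.2⟩)
          (by push_cast at hn' ⊢; simp only [hm]; linarith)
set_option maxHeartbeats 1000000 in
theorem representation_manifold_isometry
    {Z : Type*} [MetricSpace Z] {D : ℕ}
    (φ : Z → EuclideanSpace ℝ (Fin D))
    (hφcont : Continuous φ)
    (hsphere : ∀ z, ‖φ z‖ = 1)
    (g : ℝ → ℝ) (hg : ContDiff ℝ 2 g) (hg' : deriv g 0 < 0)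
    (ε : ℝ) (hε : 0 < ε)
    (hcos : ∀ z z' : Z, dist z z' ≤ ε →
      (inner ℝ (φ z) (φ z') : ℝ) = g (dist z z' ^ 2))
    {a b : ℝ} (hab : a ≤ b) (η : ℝ → Z)
    (hη : ContinuousOn η (Set.Icc a b))
    (hfin : eVariationOn η (Set.Icc a b) ≠ ⊤) :
    eVariationOn (φ ∘ η) (Set.Icc a b) =
      ENNReal.ofReal (Real.sqrt (-2 * deriv g 0)) * eVariationOn η (Set.Icc a b) := by
  obtain ⟨c, hcdef⟩ : ∃ c : ℝ, Real.sqrt (-2 * deriv g 0) = c := ⟨_, rfl⟩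
  rw [hcdef]
  have hg0pos : (0:ℝ) < -2 * deriv g 0 := by linarith
  have hc : 0 < c := hcdef ▸ Real.sqrt_pos.mpr hg0pos
  have hc2 : c ^ 2 = -2 * deriv g 0 := hcdef ▸ Real.sq_sqrt hg0pos.le
  have hg0 : g 0 = 1 := by
    have h1 := hcos (η a) (η a) (by simp [hε.le])
    rw [real_inner_self_eq_norm_sq, hsphere] at h1
    simpa using h1.symm
  -- pointwise bilipschitz estimate
  have key : ∀ δ : ℝ, 0 < δ → δ < c → ∃ r : ℝ, 0 < r ∧
      ∀ z z' : Z, dist z z' ≤ r →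
        (c - δ) * dist z z' ≤ dist (φ z) (φ z') ∧
          dist (φ z) (φ z') ≤ (c + δ) * dist z z' := by
    intro δ hδ hδc
    obtain ⟨σ, hσdef⟩ : ∃ σ : ℝ, c * δ - δ ^ 2 / 2 = σ := ⟨_, rfl⟩
    have hσ : 0 < σ := by nlinarith [mul_pos hδ (sub_pos.mpr hδc)]
    have hd : HasDerivAt g (deriv g 0) 0 :=
      ((hg.differentiable (by norm_num)) 0).hasDerivAt
    have hslope := hasDerivAt_iff_tendsto_slope.mp hd
    rw [Metric.tendsto_nhdsWithin_nhds] at hslope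
    obtain ⟨r0, hr0, hr0'⟩ := hslope σ hσ
    refine ⟨min ε (Real.sqrt (r0 / 2)),
      lt_min hε (Real.sqrt_pos.mpr (by linarith)), ?_⟩
    intro z z' hzz
    by_cases hz : z = z'
    · subst hz; simp
    · have hdpos : 0 < dist z z' := dist_pos.mpr hz
      have hdε : dist z z' ≤ ε := hzz.trans (min_le_left _ _)
      have hinner := hcos z z' hdε
      obtain ⟨d, hddef⟩ : ∃ d : ℝ, dist z z' = d := ⟨_, rfl⟩
      rw [hddef] at hzz hdpos hdε hinner ⊢
      have hsq2 : Real.sqrt (r0/2) ^ 2 = r0 / 2 := Real.sq_sqrt (by linarith)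
      have hdr : d ^ 2 < r0 := by
        have h1 : d ≤ Real.sqrt (r0/2) := hzz.trans (min_le_right _ _)
        nlinarith [Real.sqrt_nonneg (r0/2)]
      have hd2 : (0:ℝ) < d ^ 2 := by positivity
      have hslope_est : |(g (d^2) - g 0)/ (d^2) - deriv g 0| < σ := by
        have h2 := hr0' (x := d^2) (by simp [ne_of_gt hd2])
          (by rw [Real.dist_eq, abs_of_pos (by linarith)]; simpa using hdr)
        rw [Real.dist_eq] at h2
        have h3 : slope g 0 (d^2) = (g (d^2) - g 0) / (d^2) := by
          rw [slope_def_field]; ring_nf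
        rwa [h3] at h2
      have habs : |g (d^2) - g 0 - deriv g 0 * d^2| ≤ σ * d^2 := by
        have heq : g (d^2) - g 0 - deriv g 0 * d^2
            = ((g (d^2) - g 0)/(d^2) - deriv g 0) * d^2 := by field_simp
        rw [heq, abs_mul, abs_of_pos hd2]
        exact mul_le_mul_of_nonneg_right hslope_est.le hd2.le
      have hnorm : dist (φ z) (φ z') ^ 2 = 2 - 2 * g (d ^ 2) := by
        rw [dist_eq_norm, norm_sub_sq_real, hsphere, hsphere, hinner]; ring
      have habs' := abs_le.mp habs
      have hD0 : (0:ℝ) ≤ dist (φ z) (φ z') := dist_nonneg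
      have hcd : c ^ 2 * d ^ 2 = -2 * deriv g 0 * d ^ 2 := by rw [hc2]
      have hsig : σ * d ^ 2 = (c * δ - δ ^ 2 / 2) * d ^ 2 := by rw [hσdef]
      constructor
      · have hsq : ((c - δ) * d) ^ 2 ≤ dist (φ z) (φ z') ^ 2 := by
          rw [hnorm]; nlinarith [habs'.2, hcd, hsig]
        have h4 := Real.sqrt_le_sqrt hsq
        rwa [Real.sqrt_sq (mul_nonneg (by linarith) hdpos.le), Real.sqrt_sq hD0] at h4
      · have hsq : dist (φ z) (φ z') ^ 2 ≤ ((c + δ) * d) ^ 2 := by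
          rw [hnorm]; nlinarith [habs'.1, hcd, hsig, mul_pos hδ hδ, sq_nonneg (δ*d)]
        have h4 := Real.sqrt_le_sqrt hsq
        rwa [Real.sqrt_sq hD0, Real.sqrt_sq (mul_nonneg (by linarith) hdpos.le)] at h4
  -- uniform continuity
  have huc := (isCompact_Icc.uniformContinuousOn_of_continuous hη)
  rw [Metric.uniformContinuousOn_iff] at huc
  -- main comparison
  have main : ∀ δ : ℝ, 0 < δ → δ < c →
      eVariationOn (φ ∘ η) (Set.Icc a b)
        ≤ ENNReal.ofReal (c + δ) * eVariationOn η (Set.Icc a b) ∧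
      eVariationOn η (Set.Icc a b)
        ≤ ENNReal.ofReal (1 / (c - δ)) * eVariationOn (φ ∘ η) (Set.Icc a b) := by
    intro δ hδ hδc
    obtain ⟨r, hr, hkey⟩ := key δ hδ hδc
    obtain ⟨δ', hδ', hδ''⟩ := huc r hr
    have hdist : ∀ x ∈ Set.Icc a b, ∀ y ∈ Set.Icc a b, |x - y| ≤ δ'/2 →
        dist (η x) (η y) ≤ r := by
      intro x hx y hy hxy
      exact (hδ'' x hx y hy (by rw [Real.dist_eq]; linarith)).le
    constructor
    · apply evar_comp_le_of_small _ _ _ (half_pos hδ') hab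
      intro x hx y hy hxy
      have h2 := (hkey _ _ (hdist x hx y hy hxy)).2
      rw [Function.comp_apply, Function.comp_apply, edist_dist, edist_dist,
        ← ENNReal.ofReal_mul (by linarith)]
      exact ENNReal.ofReal_le_ofReal h2
    · apply evar_comp_le_of_small _ _ _ (half_pos hδ') hab
      intro x hx y hy hxy
      have h1 := (hkey _ _ (hdist x hx y hy hxy)).1
      have hcd : (0:ℝ) < c - δ := by linarith
      have h3 : dist (η x) (η y) ≤ (1/(c-δ)) * dist (φ (η x)) (φ (η y)) := by
        calc dist (η x) (η y) = (1/(c-δ)) * ((c-δ) * dist (η x) (η y)) := by field_simp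
          _ ≤ (1/(c-δ)) * dist (φ (η x)) (φ (η y)) :=
            mul_le_mul_of_nonneg_left h1 (le_of_lt (one_div_pos.mpr hcd))
      rw [Function.comp_apply, Function.comp_apply, edist_dist, edist_dist,
        ← ENNReal.ofReal_mul (le_of_lt (one_div_pos.mpr (by linarith)))]
      exact ENNReal.ofReal_le_ofReal h3
  -- squeeze
  have hΓfin : eVariationOn (φ ∘ η) (Set.Icc a b) ≠ ⊤ :=
    ne_top_of_le_ne_top (ENNReal.mul_ne_top ENNReal.ofReal_ne_top hfin)
      (main (c/2) (by linarith) (by linarith)).1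
  obtain ⟨Vr, hVr0, hVr⟩ : ∃ x : ℝ, 0 ≤ x ∧ eVariationOn η (Set.Icc a b) = ENNReal.ofReal x :=
    ⟨_, ENNReal.toReal_nonneg, (ENNReal.ofReal_toReal hfin).symm⟩
  obtain ⟨Γr, hΓr0, hΓr⟩ : ∃ x : ℝ, 0 ≤ x ∧
      eVariationOn (φ ∘ η) (Set.Icc a b) = ENNReal.ofReal x :=
    ⟨_, ENNReal.toReal_nonneg, (ENNReal.ofReal_toReal hΓfin).symm⟩
  rw [hVr, hΓr]
  rw [hVr, hΓr] at main
  have hub : ∀ δ : ℝ, 0 < δ → δ < c → Γr ≤ (c + δ) * Vr := by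
    intro δ h1 h2
    have h3 := (main δ h1 h2).1
    rw [← ENNReal.ofReal_mul (by linarith)] at h3
    exact (ENNReal.ofReal_le_ofReal_iff (mul_nonneg (by linarith) hVr0)).mp h3
  have hlb : ∀ δ : ℝ, 0 < δ → δ < c → (c - δ) * Vr ≤ Γr := by
    intro δ h1 h2
    have h3 := (main δ h1 h2).2
    rw [← ENNReal.ofReal_mul (le_of_lt (one_div_pos.mpr (by linarith)))] at h3
    have h4 := (ENNReal.ofReal_le_ofReal_iff
      (mul_nonneg (le_of_lt (one_div_pos.mpr (by linarith))) hΓr0)).mp h3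
    rw [one_div_mul_eq_div, le_div_iff₀ (by linarith : (0:ℝ) < c - δ)] at h4
    linarith
  have heq : Γr = c * Vr := by
    apply le_antisymm
    · by_contra hlt
      push_neg at hlt
      have hδpos : 0 < min (c/2) ((Γr - c*Vr)/(2*(Vr+1))) :=
        lt_min (by linarith) (div_pos (by linarith) (by positivity))
      have hδc : min (c/2) ((Γr - c*Vr)/(2*(Vr+1))) < c :=
        (min_le_left _ _).trans_lt (by linarith)
      have h5 := hub _ hδpos hδc
      have h6 : (min (c/2) ((Γr - c*Vr)/(2*(Vr+1)))) * (2*(Vr+1)) ≤ Γr - c*Vr :=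
        (le_div_iff₀ (by positivity)).mp (min_le_right _ _)
      nlinarith [mul_nonneg hδpos.le hVr0]
    · by_contra hlt
      push_neg at hlt
      have hδpos : 0 < min (c/2) ((c*Vr - Γr)/(2*(Vr+1))) :=
        lt_min (by linarith) (div_pos (by linarith) (by positivity))
      have hδc : min (c/2) ((c*Vr - Γr)/(2*(Vr+1))) < c :=
        (min_le_left _ _).trans_lt (by linarith)
      have h5 := hlb _ hδpos hδc
      have h6 : (min (c/2) ((c*Vr - Γr)/(2*(Vr+1)))) * (2*(Vr+1)) ≤ c*Vr - Γr :=
        (le_div_iff₀ (by positivity)).mp (min_le_right _ _)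
      nlinarith [mul_nonneg hδpos.le hVr0]
  rw [heq, ENNReal.ofReal_mul hc.le]
end
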